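/- Let 0 ≤ ξ < 1 and let η equal either 0 or √ξ. Define, for x > 1, I(x) := −2η/(x + η) + 1/(x − 1) + ξ/(x − ξ). Then: (1) x·I'(x) = −I(x) − H(x) where H(x) := 2η²/(x + η)² + 1/(x − 1)² + ξ²/(x − ξ)² > 0; (2) the function x ↦ x·I(x) is strictly decreasing on (1, ∞) with limit 1 + ξ − 2η > 0 as x → ∞, so x·I(x) > 1 + ξ − 2η for all x > 1; (3) I is positive and strictly decreasing on (1, ∞); (4) there is exactly one x_ph ∈ (1, ∞) with I(x_ph) = 2. -/

import Mathlib

open Real Filter Set Topology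

private lemma hasDerivAt_div_linear (c a x : ℝ) (h : x + a ≠ 0) :
    HasDerivAt (fun y => c / (y + a)) (-(c / (x + a) ^ 2)) x := by
  have h1 := (hasDerivAt_const x c).div ((hasDerivAt_id x).add_const a) h
  refine h1.congr_deriv ?_
  simp only [id_eq]
  field_simp
  ring

private lemma lim_aux (c a : ℝ) :
    Tendsto (fun x : ℝ => x * (c / (x + a))) atTop (𝓝 c) := by
  have h1 : Tendsto (fun x : ℝ => x + a) atTop atTop :=
    tendsto_atTop_add_const_right _ a tendsto_id
  have h2 : Tendsto (fun x : ℝ => c - c * a / (x + a)) atTop (𝓝 (c - 0)) :=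
    tendsto_const_nhds.sub (Tendsto.div_atTop tendsto_const_nhds h1)
  rw [sub_zero] at h2
  refine h2.congr' ?_
  filter_upwards [eventually_gt_atTop (|a| + 1)] with x hx
  have hna : -a ≤ |a| := neg_le_abs (a:=a)
  have hne : x + a ≠ 0 := by nlinarith
  field_simp
  ring

theorem stmt16
    (ξ η : ℝ) (hξ0 : 0 ≤ ξ) (hξ1 : ξ < 1)
    (hη : η = 0 ∨ η = Real.sqrt ξ)
    (I H : ℝ → ℝ)
    (hI : ∀ x, I x = -2 * η / (x + η) + 1 / (x - 1) + ξ / (x - ξ))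
    (hH : ∀ x, H x = 2 * η ^ 2 / (x + η) ^ 2 + 1 / (x - 1) ^ 2 + ξ ^ 2 / (x - ξ) ^ 2) :
    (∀ x, 1 < x → x * deriv I x = -I x - H x ∧ 0 < H x) ∧
    StrictAntiOn (fun x => x * I x) (Set.Ioi 1) ∧
    Tendsto (fun x => x * I x) atTop (𝓝 (1 + ξ - 2 * η)) ∧
    0 < 1 + ξ - 2 * η ∧
    (∀ x, 1 < x → 1 + ξ - 2 * η < x * I x) ∧
    (∀ x, 1 < x → 0 < I x) ∧
    StrictAntiOn I (Set.Ioi 1) ∧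
    (∃! x, x ∈ Set.Ioi (1 : ℝ) ∧ I x = 2) := by
  -- basic facts about η
  have hη0 : 0 ≤ η := by
    rcases hη with h | h
    · simp [h]
    · rw [h]; exact Real.sqrt_nonneg ξ
  have hL : 0 < 1 + ξ - 2 * η := by
    rcases hη with h | h
    · rw [h]; linarith
    · have h1 : Real.sqrt ξ < 1 := by
        have := Real.sqrt_lt_sqrt hξ0 hξ1
        simpa using this
      have h2 : Real.sqrt ξ ^ 2 = ξ := Real.sq_sqrt hξ0
      rw [h]; nlinarith
  -- I as a lambda with `x + a` denominators
  have hIeq : I = fun x => -2 * η / (x + η) + 1 / (x + (-1)) + ξ / (x + (-ξ)) := by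
    funext x; rw [hI x]; ring
  -- derivative of I
  have hder : ∀ x, 1 < x → HasDerivAt I
      (2 * η / (x + η) ^ 2 - 1 / (x - 1) ^ 2 - ξ / (x - ξ) ^ 2) x := by
    intro x hx
    have hne1 : x + η ≠ 0 := by positivity
    have hne2 : x + (-1) ≠ 0 := by intro h; linarith [h]
    have hne3 : x + (-ξ) ≠ 0 := by intro h; linarith [h]
    have h := ((hasDerivAt_div_linear (-2 * η) η x hne1).add
      (hasDerivAt_div_linear 1 (-1) x hne2)).add
      (hasDerivAt_div_linear ξ (-ξ) x hne3)
    rw [hIeq]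
    refine h.congr_deriv ?_
    ring
  -- positivity of denominators for x > 1
  have hpos : ∀ x : ℝ, 1 < x → 0 < x + η ∧ 0 < x - 1 ∧ 0 < x - ξ := by
    intro x hx; exact ⟨by linarith, by linarith, by linarith⟩
  -- part (1)
  have part1 : ∀ x, 1 < x → x * deriv I x = -I x - H x ∧ 0 < H x := by
    intro x hx
    obtain ⟨h1, h2, h3⟩ := hpos x hx
    constructor
    · rw [(hder x hx).deriv, hI, hH]
      field_simp
      ring
    · rw [hH]
      have t1 : 0 ≤ 2 * η ^ 2 / (x + η) ^ 2 := by positivity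
      have t2 : 0 < 1 / (x - 1) ^ 2 := by positivity
      have t3 : 0 ≤ ξ ^ 2 / (x - ξ) ^ 2 := by positivity
      linarith
  -- derivative of f x = x * I x
  have derF : ∀ x, 1 < x → HasDerivAt (fun x => x * I x) (-H x) x := by
    intro x hx
    obtain ⟨h1, h2, h3⟩ := hpos x hx
    have h := (hasDerivAt_id x).mul (hder x hx)
    refine h.congr_deriv ?_
    rw [hI, hH]
    simp only [id_eq]
    field_simp
    ring
  -- strict antitone of f
  have hantiF : StrictAntiOn (fun x => x * I x) (Set.Ioi 1) := by
    apply strictAntiOn_of_deriv_neg (convex_Ioi 1)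
    · intro x hx
      exact ((derF x hx).continuousAt).continuousWithinAt
    · intro x hx
      rw [interior_Ioi] at hx
      rw [(derF x hx).deriv]
      have := (part1 x hx).2
      linarith
  -- limit of f at top
  have hlim : Tendsto (fun x => x * I x) atTop (𝓝 (1 + ξ - 2 * η)) := by
    have h := ((lim_aux (-2 * η) η).add (lim_aux 1 (-1))).add (lim_aux ξ (-ξ))
    have he : (fun x => x * I x) =
        (fun x => x * (-2 * η / (x + η)) + x * (1 / (x + (-1))) + x * (ξ / (x + (-ξ)))) := by
      funext x; rw [hI x]; ring
    rw [he]
    have : -2 * η + 1 + ξ = 1 + ξ - 2 * η := by ring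
    rw [this] at h
    exact h
  -- gap: f x > limit for x > 1
  have hgap : ∀ x, 1 < x → 1 + ξ - 2 * η < x * I x := by
    intro x hx
    have h1 : (fun x => x * I x) (x + 1) < (fun x => x * I x) x :=
      hantiF (Set.mem_Ioi.mpr hx) (Set.mem_Ioi.mpr (by linarith)) (by linarith)
    have h2 : 1 + ξ - 2 * η ≤ (x + 1) * I (x + 1) := by
      refine le_of_tendsto hlim (eventually_atTop.2 ⟨x + 1, fun y hy => ?_⟩)
      rcases eq_or_lt_of_le hy with h | h
      · rw [← h]
      · exact le_of_lt (hantiF (Set.mem_Ioi.mpr (by linarith)) (Set.mem_Ioi.mpr (by linarith)) h)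
    simp only at h1
    linarith
  -- positivity of I
  have hIpos : ∀ x, 1 < x → 0 < I x := by
    intro x hx
    have h1 := hgap x hx
    nlinarith
  -- strict antitone of I
  have hantiI : StrictAntiOn I (Set.Ioi 1) := by
    apply strictAntiOn_of_deriv_neg (convex_Ioi 1)
    · intro x hx
      rw [mem_Ioi] at hx
      exact ((hder x hx).continuousAt).continuousWithinAt
    · intro x hx
      rw [interior_Ioi, mem_Ioi] at hx
      have h1 := (part1 x hx).1
      have h2 := (part1 x hx).2
      have h3 := hIpos x hx
      nlinarith
  -- existence and uniqueness of photon sphere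
  have hexu : ∃! x, x ∈ Set.Ioi (1 : ℝ) ∧ I x = 2 := by
    -- lower point: I (9/8) ≥ 6
    have hlow : (6 : ℝ) ≤ I (9/8) := by
      have hd : (0 : ℝ) < 9/8 + η := by linarith
      have ha : (-2 : ℝ) ≤ -2 * η / (9/8 + η) := by
        rw [le_div_iff₀ hd]; nlinarith
      have hb : (0 : ℝ) ≤ ξ / (9/8 - ξ) := div_nonneg hξ0 (by linarith)
      have hc : (1 : ℝ) / (9/8 - 1) = 8 := by norm_num
      rw [hI]
      rw [hc]
      linarith
    -- upper point
    have hf2 : 0 < 2 * I 2 := by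
      have := hgap 2 (by norm_num)
      linarith
    set x₁ : ℝ := max 3 (2 * I 2) with hx₁def
    have hx₁3 : (3 : ℝ) ≤ x₁ := le_max_left _ _
    have hx₁C : 2 * I 2 ≤ x₁ := le_max_right _ _
    have hx₁2 : (2 : ℝ) < x₁ := by linarith
    have hfx₁ : x₁ * I x₁ < 2 * I 2 := by
      have := hantiF (Set.mem_Ioi.mpr (by norm_num)) (Set.mem_Ioi.mpr (by linarith)) hx₁2
      simpa using this
    have hIx₁ : I x₁ < 2 := by nlinarith
    have hle : (9/8 : ℝ) ≤ x₁ := by linarith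
    have hcont : ContinuousOn I (Set.Icc (9/8) x₁) := by
      intro y hy
      have : (1 : ℝ) < y := by have := hy.1; linarith
      exact ((hder y this).continuousAt).continuousWithinAt
    have hsub := intermediate_value_Icc' hle hcont
    have h2mem : (2 : ℝ) ∈ Set.Icc (I x₁) (I (9/8)) := ⟨le_of_lt hIx₁, by linarith⟩
    obtain ⟨x_ph, hxmem, hxeq⟩ := hsub h2mem
    have hxph1 : (1 : ℝ) < x_ph := by have := hxmem.1; linarith
    refine ⟨x_ph, ⟨hxph1, hxeq⟩, ?_⟩
    rintro y ⟨hy1, hy2⟩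
    exact hantiI.injOn hy1 hxph1 (by rw [hy2, hxeq])
  exact ⟨part1, hantiF, hlim, hL, hgap, hIpos, hantiI, hexu⟩
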